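/- Let 𝒳 ⊆ ℝ^p be a nonempty compact set, f : ℝ^p → ℝ^n a continuous map, and 𝒴 = f(𝒳) the reachable set. Let (x_i)_{i≥1} be i.i.d. random variables with common law P_𝒳 satisfying P_𝒳(𝒳) = 1 and the boundary-positivity condition: for every y in the frontier ∂𝒴 of 𝒴 and every r > 0, P_𝒳({x ∈ 𝒳 : f(x) lies in the open ball of center y and radius r}) > 0. Let ε̄ ≥ 0 and let (ε_M)_{M≥1} be a sequence with ε_M ≥ 0 for all M and ε_M → ε̄. Define the random set Ŷ^M := convexHull({f(x_1), …, f(x_M)}) ⊕ closedBall(0, ε_M), where ⊕ is the Minkowski sum. Then, almost surely, the Hausdorff distance d_H(Ŷ^M, convexHull(𝒴) ⊕ closedBall(0, ε̄)) converges to 0 as M → ∞. -/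

import Mathlib

open MeasureTheory ProbabilityTheory Metric Filter Pointwise

/-- From finitely many existentials over ℕ, extract a uniform bound. -/
lemma randup_exists_bound_of_finite {α : Type*} {T : Set α} (hT : T.Finite) (P : α → ℕ → Prop)
    (h : ∀ y ∈ T, ∃ i, P y i) : ∃ N, ∀ y ∈ T, ∃ i < N, P y i := by
  classical
  have hall : ∀ y : α, ∃ i, y ∈ T → P y i := by
    intro y
    by_cases hy : y ∈ T
    · exact (h y hy).imp fun i hi _ => hi
    · exact ⟨0, fun hy' => absurd hy' hy⟩
  choose g hg using hall
  refine ⟨hT.toFinset.sup g + 1, fun y hy => ⟨g y, ?_, hg y hy⟩⟩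
  exact Nat.lt_succ_of_le (Finset.le_sup (hT.mem_toFinset.2 hy))

/-- Points in a ball of radius `r1` can be approximated within `|r1 - r2|` by points of the
ball of radius `r2`. -/
lemma randup_closedBall_approx {E : Type*} [NormedAddCommGroup E] [NormedSpace ℝ E]
    {r1 r2 : ℝ} (h1 : 0 ≤ r1) (h2 : 0 ≤ r2) {w : E} (hw : w ∈ closedBall (0:E) r1) :
    ∃ w' ∈ closedBall (0:E) r2, dist w w' ≤ |r1 - r2| := by
  rw [mem_closedBall, dist_zero_right] at hw
  by_cases hle : ‖w‖ ≤ r2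
  · exact ⟨w, by simpa [mem_closedBall, dist_zero_right] using hle, by simp⟩
  · push_neg at hle
    have hwpos : 0 < ‖w‖ := lt_of_le_of_lt h2 hle
    refine ⟨(r2 / ‖w‖) • w, ?_, ?_⟩
    · rw [mem_closedBall, dist_zero_right, norm_smul, Real.norm_eq_abs,
        abs_of_nonneg (by positivity), div_mul_cancel₀ _ hwpos.ne']
    · have hco : (0:ℝ) ≤ 1 - r2 / ‖w‖ := by
        have : r2 / ‖w‖ ≤ 1 := (div_le_one hwpos).2 hle.le
        linarith
      have key : dist w ((r2 / ‖w‖) • w) = ‖w‖ - r2 := by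
        rw [dist_eq_norm]
        have : w - (r2 / ‖w‖) • w = (1 - r2 / ‖w‖) • w := by
          rw [sub_smul, one_smul]
        rw [this, norm_smul, Real.norm_eq_abs, abs_of_nonneg hco, sub_mul, one_mul,
          div_mul_cancel₀ _ hwpos.ne']
      rw [key]
      have : r1 - r2 ≤ |r1 - r2| := le_abs_self _
      linarith

/-- Along any nonzero direction from a point of a compact set, one reaches the frontier. -/
lemma randup_frontier_aux {E : Type*} [NormedAddCommGroup E] [NormedSpace ℝ E]
    {S : Set E} (hS : IsCompact S) {x : E} (hx : x ∈ S) {v : E} (hv : v ≠ 0) :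
    ∃ t : ℝ, 0 ≤ t ∧ x + t • v ∈ frontier S := by
  have hvpos : 0 < ‖v‖ := norm_pos_iff.2 hv
  set T : Set ℝ := {t : ℝ | x + t • v ∈ S} with hT
  have hcont : Continuous fun t : ℝ => x + t • v :=
    continuous_const.add (continuous_id.smul continuous_const)
  have hTclosed : IsClosed T := hS.isClosed.preimage hcont
  obtain ⟨C, hC⟩ := hS.isBounded.exists_norm_le
  have hTsub : T ⊆ Set.Icc (-((C + ‖x‖) / ‖v‖)) ((C + ‖x‖) / ‖v‖) := by
    intro t ht
    have h1 : ‖x + t • v‖ ≤ C := hC _ ht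
    have h2 : |t| * ‖v‖ ≤ C + ‖x‖ := by
      have e1 : |t| * ‖v‖ = ‖t • v‖ := by rw [norm_smul, Real.norm_eq_abs]
      have e2 : t • v = (x + t • v) - x := by abel
      rw [e1, e2]
      have := norm_sub_le (x + t • v) x
      linarith
    rw [Set.mem_Icc, ← abs_le, le_div_iff₀ hvpos]
    exact h2
  have hTcompact : IsCompact T := isCompact_Icc.of_isClosed_subset hTclosed hTsub
  have h0T : (0:ℝ) ∈ T := by simpa [hT] using hx
  have hTne : T.Nonempty := ⟨0, h0T⟩
  have hbT : sSup T ∈ T := hTcompact.sSup_mem hTne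
  have hb0 : (0:ℝ) ≤ sSup T := le_csSup hTcompact.bddAbove h0T
  refine ⟨sSup T, hb0, ?_⟩
  rw [frontier_eq_closure_inter_closure]
  refine ⟨subset_closure hbT, ?_⟩
  have htend : Tendsto (fun m : ℕ => x + (sSup T + 1 / (m + 1)) • v) atTop
      (nhds (x + sSup T • v)) := by
    have h1 : Tendsto (fun m : ℕ => sSup T + 1 / ((m:ℝ) + 1)) atTop (nhds (sSup T)) := by
      have := tendsto_one_div_add_atTop_nhds_zero_nat (𝕜 := ℝ)
      have h2 := this.const_add (sSup T)
      simpa using h2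
    have := (h1.smul_const v).const_add x
    simpa using this
  refine mem_closure_of_tendsto htend ?_
  filter_upwards with m
  intro hmem
  have hmT : sSup T + 1 / ((m:ℝ) + 1) ∈ T := hmem
  have hle := le_csSup hTcompact.bddAbove hmT
  have hpos : (0:ℝ) < 1 / ((m:ℝ) + 1) := by positivity
  linarith

/-- In a nontrivial real normed space, a compact set lies in the convex hull of its frontier. -/
lemma randup_subset_convexHull_frontier {E : Type*} [NormedAddCommGroup E] [NormedSpace ℝ E]
    [Nontrivial E] {S : Set E} (hS : IsCompact S) : S ⊆ convexHull ℝ (frontier S) := by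
  intro x hx
  obtain ⟨v, hv⟩ := exists_ne (0 : E)
  obtain ⟨tb, htb0, htb⟩ := randup_frontier_aux hS hx hv
  obtain ⟨ta, hta0, hta⟩ := randup_frontier_aux hS hx (neg_ne_zero.2 hv)
  rcases eq_or_lt_of_le hta0 with hta' | hta'
  · -- ta = 0 : x itself is a frontier point
    have : x + ta • (-v) = x := by rw [← hta', zero_smul, add_zero]
    rw [this] at hta
    exact subset_convexHull ℝ _ hta
  rcases eq_or_lt_of_le htb0 with htb' | htb'
  · have : x + tb • v = x := by rw [← htb', zero_smul, add_zero]
    rw [this] at htb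
    exact subset_convexHull ℝ _ htb
  -- x lies on the segment between the two frontier points
  have hs : (0:ℝ) < ta + tb := by linarith
  have hxseg : x ∈ segment ℝ (x + ta • (-v)) (x + tb • v) := by
    refine ⟨tb / (ta + tb), ta / (ta + tb), by positivity, by positivity, ?_, ?_⟩
    · field_simp
      ring
    · have : (tb / (ta + tb)) • (x + ta • (-v)) + (ta / (ta + tb)) • (x + tb • v)
          = (tb / (ta + tb) + ta / (ta + tb)) • x
            + ((ta / (ta + tb)) * tb - (tb / (ta + tb)) * ta) • v := by
        simp only [smul_add, smul_neg, smul_smul, sub_smul, add_smul]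
        abel
      rw [this]
      have h1 : tb / (ta + tb) + ta / (ta + tb) = 1 := by field_simp; ring
      have h2 : (ta / (ta + tb)) * tb - (tb / (ta + tb)) * ta = 0 := by field_simp; ring
      rw [h1, h2, one_smul, zero_smul, add_zero]
  exact segment_subset_convexHull hta htb hxseg

/-- Almost surely some sample hits a set of positive probability. -/
lemma randup_exists_sample_ae {Ω : Type*} [MeasureSpace Ω] [IsProbabilityMeasure (ℙ : Measure Ω)]
    {β : Type*} [MeasurableSpace β] (x : ℕ → Ω → β) (hxmeas : ∀ i, Measurable (x i))
    (P : Measure β) [IsProbabilityMeasure P]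
    (hlaw : ∀ i, Measure.map (x i) ℙ = P)
    (hindep : iIndepFun x ℙ)
    {E : Set β} (hE : MeasurableSet E) (hpos : 0 < P E) :
    ∀ᵐ ω ∂ℙ, ∃ i, x i ω ∈ E := by
  have key : ∀ k : ℕ, ℙ {ω | ∀ i, x i ω ∉ E} ≤ (P Eᶜ) ^ k := by
    intro k
    have h1 : {ω | ∀ i, x i ω ∉ E} ⊆ ⋂ i ∈ Finset.range k, (x i) ⁻¹' Eᶜ := by
      intro ω hω
      simp only [Set.mem_iInter]
      intro i _
      exact hω i
    have h2 : ℙ (⋂ i ∈ Finset.range k, (x i) ⁻¹' Eᶜ)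
        = ∏ i ∈ Finset.range k, ℙ ((x i) ⁻¹' Eᶜ) :=
      hindep.meas_biInter (fun i _ => ⟨Eᶜ, hE.compl, rfl⟩)
    have h3 : ∀ i, ℙ ((x i) ⁻¹' Eᶜ) = P Eᶜ := fun i => by
      rw [← hlaw i, Measure.map_apply (hxmeas i) hE.compl]
    calc ℙ {ω | ∀ i, x i ω ∉ E} ≤ ℙ (⋂ i ∈ Finset.range k, (x i) ⁻¹' Eᶜ) := measure_mono h1
      _ = ∏ i ∈ Finset.range k, ℙ ((x i) ⁻¹' Eᶜ) := h2
      _ = (P Eᶜ) ^ k := by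
          rw [Finset.prod_congr rfl (fun i _ => h3 i), Finset.prod_const, Finset.card_range]
  have hlt : P Eᶜ < 1 := by
    rw [prob_compl_eq_one_sub hE]
    exact ENNReal.sub_lt_self ENNReal.one_ne_top one_ne_zero hpos.ne'
  have htend := ENNReal.tendsto_pow_atTop_nhds_zero_of_lt_one hlt
  have h0 : ℙ {ω | ∀ i, x i ω ∉ E} = 0 :=
    le_antisymm (ge_of_tendsto' htend key) zero_le
  rw [ae_iff]
  convert h0 using 2
  ext ω
  push_neg
  rfl

/-- **Asymptotic convergence of ε-RandUP** (Theorem 1).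
If `𝒳 ⊆ ℝ^p` is nonempty compact, `f` continuous, the i.i.d. samples have law `P𝒳`
supported on `𝒳` satisfying the boundary-positivity condition, and `εs M → εbar`,
then almost surely the Hausdorff distance between the padded convex hull of the first
`M` output samples and `convexHull (f '' 𝒳) ⊕ closedBall 0 εbar` tends to `0`. -/
theorem randup_asymptotic_convergence {p n : ℕ}
    (𝒳 : Set (EuclideanSpace ℝ (Fin p))) (h𝒳ne : 𝒳.Nonempty) (h𝒳c : IsCompact 𝒳)
    (f : EuclideanSpace ℝ (Fin p) → EuclideanSpace ℝ (Fin n)) (hf : Continuous f)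
    {Ω : Type*} [MeasureSpace Ω] [IsProbabilityMeasure (ℙ : Measure Ω)]
    (x : ℕ → Ω → EuclideanSpace ℝ (Fin p)) (hxmeas : ∀ i, Measurable (x i))
    (P𝒳 : Measure (EuclideanSpace ℝ (Fin p))) [IsProbabilityMeasure P𝒳]
    (hlaw : ∀ i, Measure.map (x i) ℙ = P𝒳)
    (hindep : iIndepFun x ℙ)
    (hsupp : P𝒳 𝒳 = 1)
    (hbd : ∀ y ∈ frontier (f '' 𝒳), ∀ r > 0,
      0 < P𝒳 {x' ∈ 𝒳 | f x' ∈ Metric.ball y r})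
    (εbar : ℝ) (hεbar : 0 ≤ εbar)
    (εs : ℕ → ℝ) (hεs : ∀ M, 0 ≤ εs M)
    (hεlim : Tendsto εs atTop (nhds εbar)) :
    ∀ᵐ ω ∂ℙ, Tendsto (fun M : ℕ =>
        Metric.hausdorffDist
          (convexHull ℝ ((fun i => f (x i ω)) '' Set.Iio M) + Metric.closedBall (0 : EuclideanSpace ℝ (Fin n)) (εs M))
          (convexHull ℝ (f '' 𝒳) + Metric.closedBall (0 : EuclideanSpace ℝ (Fin n)) εbar))
      atTop (nhds 0) := by
  classical
  set Y : Set (EuclideanSpace ℝ (Fin n)) := f '' 𝒳 with hYdef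
  have hYcompact : IsCompact Y := h𝒳c.image hf
  have hYne : Y.Nonempty := h𝒳ne.image f
  have h𝒳meas : MeasurableSet 𝒳 := h𝒳c.isClosed.measurableSet
  have hfrc : IsCompact (frontier Y) :=
    hYcompact.of_isClosed_subset isClosed_frontier hYcompact.isClosed.frontier_subset
  -- finite covers of the frontier at scale 1/(2(k+1))
  have hcovex : ∀ k : ℕ, ∃ t : Set (EuclideanSpace ℝ (Fin n)), t ⊆ frontier Y ∧ t.Finite ∧
      frontier Y ⊆ ⋃ y ∈ t, ball y (1 / (2 * ((k:ℝ) + 1))) := by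
    intro k
    exact hfrc.finite_cover_balls (by positivity)
  choose t ht_sub ht_fin ht_cov using hcovex
  -- a.e. events
  have hmemae : ∀ᵐ ω ∂ℙ, ∀ i, x i ω ∈ 𝒳 := by
    rw [ae_all_iff]
    intro i
    have h0 : ℙ ((x i) ⁻¹' 𝒳ᶜ) = 0 := by
      have hmap := Measure.map_apply (μ := ℙ) (hxmeas i) h𝒳meas.compl
      rw [hlaw i] at hmap
      rw [← hmap, prob_compl_eq_one_sub h𝒳meas, hsupp, tsub_self]
    rw [ae_iff]
    exact h0
  have hhit : ∀ᵐ ω ∂ℙ, ∀ k : ℕ, ∀ y ∈ t k, ∃ i, f (x i ω) ∈ ball y (1 / (2 * ((k:ℝ) + 1))) := by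
    rw [ae_all_iff]
    intro k
    rw [ae_ball_iff (ht_fin k).countable]
    intro y hy
    have hyfr : y ∈ frontier Y := ht_sub k hy
    have hrpos : (0:ℝ) < 1 / (2 * ((k:ℝ) + 1)) := by positivity
    have hpos := hbd y hyfr _ hrpos
    have hEmeas : MeasurableSet {x' ∈ 𝒳 | f x' ∈ ball y (1 / (2 * ((k:ℝ) + 1)))} :=
      h𝒳meas.inter ((isOpen_ball.measurableSet).preimage hf.measurable)
    have := randup_exists_sample_ae x hxmeas P𝒳 hlaw hindep hEmeas hpos
    filter_upwards [this] with ω hω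
    obtain ⟨i, hi⟩ := hω
    exact ⟨i, hi.2⟩
  filter_upwards [hmemae, hhit] with ω hωmem hωhit
  -- deterministic part
  rw [Metric.tendsto_atTop]
  intro ε hε
  have hε3 : (0:ℝ) < ε / 3 := by linarith
  obtain ⟨k, hk⟩ := exists_nat_one_div_lt hε3
  obtain ⟨N1, hN1⟩ := randup_exists_bound_of_finite (ht_fin k)
    (fun y i => f (x i ω) ∈ ball y (1 / (2 * ((k:ℝ) + 1)))) (hωhit k)
  obtain ⟨N2, hN2⟩ := (Metric.tendsto_atTop.1 hεlim) (ε / 3) hε3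
  refine ⟨max (max N1 N2) 1, fun M hM => ?_⟩
  have hM1 : 1 ≤ M := le_trans (le_max_right _ _) hM
  have hMN1 : N1 ≤ M := le_trans (le_trans (le_max_left _ _) (le_max_left _ _)) hM
  have hMN2 : N2 ≤ M := le_trans (le_trans (le_max_right _ _) (le_max_left _ _)) hM
  have hεM : |εs M - εbar| < ε / 3 := by
    have := hN2 M hMN2
    rwa [Real.dist_eq] at this
  set K : Set (EuclideanSpace ℝ (Fin n)) := (fun i => f (x i ω)) '' Set.Iio M with hKdef
  have hKY : K ⊆ Y := by
    rintro _ ⟨i, _, rfl⟩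
    exact ⟨x i ω, hωmem i, rfl⟩
  have hKne : K.Nonempty := ⟨f (x 0 ω), ⟨0, by simpa using (show 0 < M by omega), rfl⟩⟩
  -- coverage : convexHull Y ⊆ convexHull K + closedBall 0 (ε/3)
  have hYsub : convexHull ℝ Y ⊆ convexHull ℝ K + closedBall (0 : EuclideanSpace ℝ (Fin n)) (ε / 3) := by
    rcases subsingleton_or_nontrivial (EuclideanSpace ℝ (Fin n)) with hsub | hnt
    · intro u hu
      obtain ⟨z, hz⟩ := hKne
      have h0 : (0 : EuclideanSpace ℝ (Fin n)) ∈ closedBall (0 : EuclideanSpace ℝ (Fin n)) (ε / 3) := by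
        simp only [mem_closedBall, dist_self]
        linarith
      have hmem := Set.add_mem_add (subset_convexHull ℝ K hz) h0
      rwa [Subsingleton.elim u (z + 0)]
    · have hfr_sub : frontier Y ⊆ convexHull ℝ K + closedBall (0 : EuclideanSpace ℝ (Fin n)) (ε / 3) := by
        intro z hz
        obtain ⟨y, hy, hzy⟩ := Set.mem_iUnion₂.1 (ht_cov k hz)
        obtain ⟨i, hiN, hib⟩ := hN1 y hy
        have hiM : i < M := lt_of_lt_of_le hiN hMN1
        have hKi : f (x i ω) ∈ K := ⟨i, hiM, rfl⟩
        have hdist : dist z (f (x i ω)) ≤ ε / 3 := by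
          have d1 : dist z y < 1 / (2 * ((k:ℝ) + 1)) := hzy
          have d2 : dist (f (x i ω)) y < 1 / (2 * ((k:ℝ) + 1)) := hib
          have dtri := dist_triangle z y (f (x i ω))
          have d2' : dist y (f (x i ω)) < 1 / (2 * ((k:ℝ) + 1)) := by rwa [dist_comm] at d2
          have hhalf : 1 / (2 * ((k:ℝ) + 1)) = 1 / ((k:ℝ) + 1) / 2 := by
            rw [div_div]; ring_nf
          linarith
        refine ⟨f (x i ω), subset_convexHull ℝ _ hKi, z - f (x i ω), ?_, by module⟩
        rw [mem_closedBall, dist_zero_right]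
        rwa [← dist_eq_norm]
      have hconv : Convex ℝ (convexHull ℝ K + closedBall (0 : EuclideanSpace ℝ (Fin n)) (ε / 3)) :=
        (convex_convexHull ℝ K).add (convex_closedBall _ _)
      have h1 : Y ⊆ convexHull ℝ (frontier Y) := randup_subset_convexHull_frontier hYcompact
      have h2 : convexHull ℝ Y ⊆ convexHull ℝ (frontier Y) :=
        convexHull_min h1 (convex_convexHull ℝ _)
      exact h2.trans (convexHull_min hfr_sub hconv)
  -- the Hausdorff distance bound
  have hr0 : (0:ℝ) ≤ ε / 3 + |εs M - εbar| := by positivity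
  have hHD : hausdorffDist
      (convexHull ℝ K + closedBall (0 : EuclideanSpace ℝ (Fin n)) (εs M))
      (convexHull ℝ Y + closedBall (0 : EuclideanSpace ℝ (Fin n)) εbar)
      ≤ ε / 3 + |εs M - εbar| := by
    apply hausdorffDist_le_of_mem_dist hr0
    · rintro a ha
      obtain ⟨u, hu, w, hw, rfl⟩ := Set.mem_add.1 ha
      obtain ⟨w', hw', hdw⟩ := randup_closedBall_approx (hεs M) hεbar hw
      refine ⟨u + w', Set.add_mem_add (convexHull_mono hKY hu) hw', ?_⟩
      rw [dist_add_left]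
      calc dist w w' ≤ |εs M - εbar| := hdw
        _ ≤ ε / 3 + |εs M - εbar| := by linarith [hε3.le]
    · rintro b hb
      obtain ⟨u, hu, w, hw, rfl⟩ := Set.mem_add.1 hb
      obtain ⟨v, hv, z, hz, hvz⟩ := Set.mem_add.1 (hYsub hu)
      obtain ⟨w', hw', hdw⟩ := randup_closedBall_approx hεbar (hεs M) hw
      refine ⟨v + w', Set.add_mem_add hv hw', ?_⟩
      have hzn : ‖z‖ ≤ ε / 3 := by
        have := mem_closedBall.1 hz
        rwa [dist_zero_right] at this
      rw [dist_comm]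
      have : dist (v + w') (u + w) = ‖(w' - w) - z‖ := by
        rw [dist_eq_norm, ← hvz]
        congr 1
        abel
      rw [this]
      calc ‖(w' - w) - z‖ ≤ ‖w' - w‖ + ‖z‖ := norm_sub_le _ _
        _ = dist w w' + ‖z‖ := by rw [dist_eq_norm, norm_sub_rev]
        _ ≤ |εbar - εs M| + (ε / 3) := add_le_add hdw hzn
        _ = ε / 3 + |εs M - εbar| := by rw [abs_sub_comm]; ring
  have hnn : (0:ℝ) ≤ hausdorffDist
      (convexHull ℝ K + closedBall (0 : EuclideanSpace ℝ (Fin n)) (εs M))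
      (convexHull ℝ Y + closedBall (0 : EuclideanSpace ℝ (Fin n)) εbar) :=
    hausdorffDist_nonneg
  rw [Real.dist_0_eq_abs, abs_of_nonneg hnn]
  calc hausdorffDist _ _ ≤ ε / 3 + |εs M - εbar| := hHD
    _ < ε / 3 + ε / 3 := by linarith
    _ < ε := by linarith
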